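/- Under the same setting, the variance bound E‖(1/n)∑_{τ=1}^n (∇f_{i_k^τ}^{(τ)}(x^k) − ∇f_{i_k^τ}^{(τ)}(w^k)) + ∇f(w^k) − ∇f(x^k)‖² ≤ (4L/n)[P(x^k) − P(x*) + P(w^k) − P(x*)] holds, where i_k^τ is uniform on [m], independent across τ. -/

import Mathlib

open scoped InnerProductSpace
variable {E : Type*} [NormedAddCommGroup E] [InnerProductSpace ℝ E] [CompleteSpace E]

lemma hasDerivAt_line {f : E → ℝ} {g : E → E} (hgrad : ∀ u, HasGradientAt f (g u) u)
    (x d : E) (t : ℝ) : HasDerivAt (fun s : ℝ => f (x + s • d)) ⟪g (x + t • d), d⟫_ℝ t := by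
  have hc : HasDerivAt (fun s : ℝ => x + s • d) d t := by
    simpa using ((hasDerivAt_id t).smul_const d).const_add x
  have hf := (hgrad (x + t • d)).hasFDerivAt
  have h := hf.comp_hasDerivAt t hc
  simp only [InnerProductSpace.toDual_apply_apply] at h
  exact h

lemma conv_lower {f : E → ℝ} {g : E → E} (hconv : ConvexOn ℝ Set.univ f)
    (hgrad : ∀ u, HasGradientAt f (g u) u) (x y : E) :
    f x + ⟪g x, y - x⟫_ℝ ≤ f y := by
  set d := y - x with hd
  have hφconv : ConvexOn ℝ Set.univ (fun t : ℝ => f (x + t • d)) := by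
    have h := hconv.comp_affineMap (AffineMap.lineMap x y : ℝ →ᵃ[ℝ] E)
    have : (fun t : ℝ => f (x + t • d)) = (f ∘ (AffineMap.lineMap x y : ℝ →ᵃ[ℝ] E)) := by
      funext t
      simp only [Function.comp, AffineMap.lineMap_apply_module, hd]
      congr 1
      module
    rw [this]
    simpa using h
  have hder := hasDerivAt_line hgrad x d 0
  rw [zero_smul, add_zero] at hder
  have hle := hφconv.le_slope_of_hasDerivAt (Set.mem_univ (0:ℝ)) (Set.mem_univ (1:ℝ))
    zero_lt_one hder
  rw [slope_def_field] at hle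
  simp only [one_smul, zero_smul, add_zero, sub_zero, div_one] at hle
  have : x + d = y := by rw [hd]; abel
  rw [this] at hle
  linarith

lemma descent {f : E → ℝ} {g : E → E} {L : ℝ} (hL : 0 < L)
    (hgrad : ∀ u, HasGradientAt f (g u) u) (hlip : LipschitzWith (Real.toNNReal L) g)
    (x y : E) : f y ≤ f x + ⟪g x, y - x⟫_ℝ + L / 2 * ‖y - x‖ ^ 2 := by
  set d := y - x with hd
  have hcontg : Continuous g := hlip.continuous
  have hcont : Continuous fun t : ℝ => ⟪g (x + t • d), d⟫_ℝ := by
    exact (hcontg.comp (continuous_const.add (continuous_id.smul continuous_const))).inner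
      continuous_const
  have hderiv : ∀ t ∈ Set.uIcc (0:ℝ) 1,
      HasDerivAt (fun s : ℝ => f (x + s • d)) ⟪g (x + t • d), d⟫_ℝ t :=
    fun t _ => hasDerivAt_line hgrad x d t
  have hint : IntervalIntegrable (fun t : ℝ => ⟪g (x + t • d), d⟫_ℝ) MeasureTheory.volume 0 1 :=
    hcont.intervalIntegrable 0 1
  have heq : f (x + (1:ℝ) • d) - f (x + (0:ℝ) • d)
      = ∫ t in (0:ℝ)..1, ⟪g (x + t • d), d⟫_ℝ :=
    (intervalIntegral.integral_eq_sub_of_hasDerivAt hderiv hint).symm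
  have hbound : ∀ t ∈ Set.Icc (0:ℝ) 1,
      ⟪g (x + t • d), d⟫_ℝ ≤ ⟪g x, d⟫_ℝ + (L * ‖d‖ ^ 2) * t := by
    intro t ht
    have h1 : ⟪g (x + t • d), d⟫_ℝ - ⟪g x, d⟫_ℝ = ⟪g (x + t • d) - g x, d⟫_ℝ := by
      rw [inner_sub_left]
    have h2 : ⟪g (x + t • d) - g x, d⟫_ℝ ≤ ‖g (x + t • d) - g x‖ * ‖d‖ :=
      real_inner_le_norm _ _
    have h3 : ‖g (x + t • d) - g x‖ ≤ L * (t * ‖d‖) := by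
      have := hlip.dist_le_mul (x + t • d) x
      rw [dist_eq_norm, Real.coe_toNNReal _ hL.le] at this
      simpa [norm_smul, abs_of_nonneg ht.1] using this
    nlinarith [norm_nonneg d, norm_nonneg (g (x + t • d) - g x), ht.1]
  have hmono : (∫ t in (0:ℝ)..1, ⟪g (x + t • d), d⟫_ℝ)
      ≤ ∫ t in (0:ℝ)..1, (⟪g x, d⟫_ℝ + (L * ‖d‖ ^ 2) * t) := by
    apply intervalIntegral.integral_mono_on zero_le_one hint
    · exact (continuous_const.add (continuous_const.mul continuous_id)).intervalIntegrable 0 1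
    · exact hbound
  have hval : (∫ t in (0:ℝ)..1, (⟪g x, d⟫_ℝ + (L * ‖d‖ ^ 2) * t))
      = ⟪g x, d⟫_ℝ + L / 2 * ‖d‖ ^ 2 := by
    have hi : IntervalIntegrable (fun t : ℝ => (L * ‖d‖ ^ 2) * t) MeasureTheory.volume 0 1 :=
      (continuous_const.mul continuous_id').intervalIntegrable 0 1
    rw [intervalIntegral.integral_add (intervalIntegrable_const) hi]
    rw [intervalIntegral.integral_const, intervalIntegral.integral_const_mul, integral_id]
    norm_num
    ring
  have h0 : x + (0:ℝ) • d = x := by simp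
  have h1 : x + (1:ℝ) • d = y := by rw [hd]; simp
  rw [h0, h1] at heq
  linarith [heq, hmono, hval.le, hval.ge]

lemma grad_sq_le {f : E → ℝ} {g : E → E} {L : ℝ} (hL : 0 < L)
    (hconv : ConvexOn ℝ Set.univ f) (hgrad : ∀ u, HasGradientAt f (g u) u)
    (hlip : LipschitzWith (Real.toNNReal L) g) (x y : E) :
    ‖g x - g y‖ ^ 2 ≤ 2 * L * (f x - f y - ⟪g y, x - y⟫_ℝ) := by
  set v := g x - g y with hv
  set z := x - (L⁻¹ : ℝ) • v with hz
  have h1 : f z ≤ f x + ⟪g x, z - x⟫_ℝ + L / 2 * ‖z - x‖ ^ 2 := descent hL hgrad hlip x z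
  have h2 : f y + ⟪g y, z - y⟫_ℝ ≤ f z := conv_lower hconv hgrad y z
  have hzx : z - x = -(L⁻¹ : ℝ) • v := by rw [hz]; module
  have e1 : ⟪g x, z - x⟫_ℝ = -(L⁻¹ : ℝ) * ⟪g x, v⟫_ℝ := by
    rw [hzx, real_inner_smul_right]
  have e2 : ‖z - x‖ ^ 2 = (L⁻¹ : ℝ) ^ 2 * ‖v‖ ^ 2 := by
    rw [hzx, norm_smul]
    simp [abs_of_pos (inv_pos.mpr hL), mul_pow]
  have e3 : ⟪g y, z - y⟫_ℝ = ⟪g y, x - y⟫_ℝ - (L⁻¹ : ℝ) * ⟪g y, v⟫_ℝ := by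
    have : z - y = (x - y) + (-(L⁻¹ : ℝ) • v) := by rw [hz]; module
    rw [this, inner_add_right, real_inner_smul_right]
    ring
  have e4 : ⟪g x, v⟫_ℝ - ⟪g y, v⟫_ℝ = ‖v‖ ^ 2 := by
    rw [← inner_sub_left, ← hv, real_inner_self_eq_norm_sq]
  have hLne : (L : ℝ) ≠ 0 := hL.ne'
  rw [e1, e2] at h1
  rw [e3] at h2
  have key : ⟪g y, x - y⟫_ℝ - (L⁻¹ : ℝ) * ⟪g y, v⟫_ℝ + f y
      ≤ f x - (L⁻¹ : ℝ) * ⟪g x, v⟫_ℝ + L / 2 * ((L⁻¹ : ℝ) ^ 2 * ‖v‖ ^ 2) := by linarith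
  have hstep : 1 / (2 * L) * ‖v‖ ^ 2 ≤ f x - f y - ⟪g y, x - y⟫_ℝ := by
    have hc : L / 2 * ((L⁻¹ : ℝ) ^ 2 * ‖v‖ ^ 2) = 1 / (2 * L) * ‖v‖ ^ 2 := by
      field_simp
    have hA : (L⁻¹ : ℝ) * ⟪g x, v⟫_ℝ - (L⁻¹ : ℝ) * ⟪g y, v⟫_ℝ = (L⁻¹ : ℝ) * ‖v‖ ^ 2 := by
      rw [← mul_sub, e4]
    have hd : (L⁻¹ : ℝ) * ‖v‖ ^ 2 - 1 / (2 * L) * ‖v‖ ^ 2 = 1 / (2 * L) * ‖v‖ ^ 2 := by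
      field_simp
      ring
    linarith
  have h2L : (0:ℝ) < 2 * L := by positivity
  have hfin := mul_le_mul_of_nonneg_left hstep h2L.le
  have hone : 2 * L * (1 / (2 * L) * ‖v‖ ^ 2) = ‖v‖ ^ 2 := by field_simp
  linarith

lemma opt_lemma {F : E → ℝ} {gF : E → E} (hgradF : ∀ u, HasGradientAt F (gF u) u)
    {ψ : E → ℝ} (hψ : ConvexOn ℝ Set.univ ψ) {P : E → ℝ} (hP : ∀ y, P y = F y + ψ y)
    {xstar : E} (hmin : ∀ y, P xstar ≤ P y) (y : E) :
    F y - F xstar - ⟪gF xstar, y - xstar⟫_ℝ ≤ P y - P xstar := by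
  set d := y - xstar with hd
  set χ : ℝ → ℝ := fun t => F (xstar + t • d) with hχ
  have hder : HasDerivAt χ ⟪gF xstar, d⟫_ℝ 0 := by
    have := hasDerivAt_line hgradF xstar d 0
    simpa using this
  have hslope : Filter.Tendsto (slope χ 0) (nhdsWithin 0 (Set.Ioi 0)) (nhds ⟪gF xstar, d⟫_ℝ) := by
    refine (hasDerivAt_iff_tendsto_slope.mp hder).mono_left (nhdsWithin_mono 0 ?_)
    intro t ht
    exact ne_of_gt ht
  have hev : ∀ᶠ t in nhdsWithin 0 (Set.Ioi 0), ψ xstar - ψ y ≤ slope χ 0 t := by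
    filter_upwards [Ioo_mem_nhdsGT_of_mem (show (0:ℝ) ∈ Set.Ico 0 1 by norm_num)] with t ht
    have ht0 : 0 < t := ht.1
    have ht1 : t < 1 := ht.2
    have hconvψ := hψ.2 (Set.mem_univ xstar) (Set.mem_univ y)
      (by linarith : (0:ℝ) ≤ 1 - t) ht0.le (by ring)
    have hpt : xstar + t • d = (1 - t) • xstar + t • y := by rw [hd]; module
    have hm := hmin (xstar + t • d)
    rw [hP, hP] at hm
    rw [hpt] at hm
    have hψle : ψ ((1 - t) • xstar + t • y) ≤ (1 - t) * ψ xstar + t * ψ y := by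
      simpa [smul_eq_mul] using hconvψ
    have hχ0 : χ 0 = F xstar := by simp [hχ]
    have hχt : χ t = F ((1 - t) • xstar + t • y) := by simp only [hχ]; rw [hpt]
    rw [slope_def_field]
    rw [sub_zero, le_div_iff₀ ht0]
    have : F xstar + ψ xstar ≤ F ((1 - t) • xstar + t • y) + ((1 - t) * ψ xstar + t * ψ y) :=
      le_trans hm (by linarith)
    rw [hχt, hχ0]
    nlinarith
  have hge : ψ xstar - ψ y ≤ ⟪gF xstar, d⟫_ℝ := ge_of_tendsto hslope hev
  rw [hP, hP]
  linarith

lemma card_ne_fun {n m : ℕ} (τ : Fin n) :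
    Fintype.card ({j : Fin n // j ≠ τ} → Fin m) = m ^ (n - 1) := by
  rw [Fintype.card_fun]
  congr 1
  · exact Fintype.card_fin m
  · rw [Fintype.card_subtype_compl, Fintype.card_fin, Fintype.card_subtype_eq]

lemma sum_fiber {n m : ℕ} (τ : Fin n) (h : Fin m → ℝ) :
    ∑ σ : Fin n → Fin m, h (σ τ) = (m : ℝ) ^ (n - 1) * ∑ a, h a := by
  rw [Fintype.sum_equiv (Equiv.funSplitAt τ (Fin m)) (fun σ => h (σ τ)) (fun p => h p.1)
    (fun σ => rfl)]
  rw [Fintype.sum_prod_type]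
  simp [Finset.sum_const, card_ne_fun τ, mul_comm, Finset.sum_mul]

lemma sum_offdiag {n m : ℕ} {τ τ' : Fin n} (hne : τ' ≠ τ) (K : Fin m → Fin m → ℝ)
    (hK : ∀ b, ∑ a, K a b = 0) :
    ∑ σ : Fin n → Fin m, K (σ τ) (σ τ') = 0 := by
  rw [Fintype.sum_equiv (Equiv.funSplitAt τ (Fin m)) (fun σ => K (σ τ) (σ τ'))
    (fun p => K p.1 (p.2 ⟨τ', hne⟩)) (fun σ => rfl)]
  rw [Fintype.sum_prod_type]
  rw [Finset.sum_comm]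
  simp [hK]

lemma sum_sq_indep {n m : ℕ} (Y : Fin n → Fin m → E) (hY : ∀ τ, ∑ i, Y τ i = 0) :
    ∑ σ : Fin n → Fin m, ‖∑ τ, Y τ (σ τ)‖ ^ 2
      = (m : ℝ) ^ (n - 1) * ∑ τ, ∑ i, ‖Y τ i‖ ^ 2 := by
  have hexp : ∀ σ : Fin n → Fin m, ‖∑ τ, Y τ (σ τ)‖ ^ 2
      = ∑ τ, ∑ τ', ⟪Y τ (σ τ), Y τ' (σ τ')⟫_ℝ := by
    intro σ
    rw [← real_inner_self_eq_norm_sq, sum_inner]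
    exact Finset.sum_congr rfl fun τ _ => inner_sum _ _ _
  simp_rw [hexp]
  rw [Finset.sum_comm]
  have hsw : ∀ τ : Fin n, ∑ σ : Fin n → Fin m, ∑ τ' : Fin n, ⟪Y τ (σ τ), Y τ' (σ τ')⟫_ℝ
      = ∑ τ' : Fin n, ∑ σ : Fin n → Fin m, ⟪Y τ (σ τ), Y τ' (σ τ')⟫_ℝ := fun τ =>
    Finset.sum_comm
  rw [Finset.sum_congr rfl (fun τ _ => hsw τ)]
  have hdiag : ∀ τ : Fin n, ∑ τ' : Fin n, ∑ σ : Fin n → Fin m,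
      ⟪Y τ (σ τ), Y τ' (σ τ')⟫_ℝ = (m : ℝ) ^ (n - 1) * ∑ i, ‖Y τ i‖ ^ 2 := by
    intro τ
    rw [← Finset.add_sum_erase _ _ (Finset.mem_univ τ)]
    have hoff : ∑ τ' ∈ Finset.univ.erase τ, ∑ σ : Fin n → Fin m,
        ⟪Y τ (σ τ), Y τ' (σ τ')⟫_ℝ = 0 := by
      apply Finset.sum_eq_zero
      intro τ' hτ'
      have hne : τ' ≠ τ := Finset.ne_of_mem_erase hτ'
      apply sum_offdiag hne (fun a b => ⟪Y τ a, Y τ' b⟫_ℝ)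
      intro b
      rw [← sum_inner, hY τ, inner_zero_left]
    rw [hoff, add_zero]
    have : ∀ σ : Fin n → Fin m, ⟪Y τ (σ τ), Y τ (σ τ)⟫_ℝ = ‖Y τ (σ τ)‖ ^ 2 := fun σ =>
      real_inner_self_eq_norm_sq _
    simp_rw [this]
    exact sum_fiber τ (fun a => ‖Y τ a‖ ^ 2)
  rw [Finset.sum_congr rfl (fun τ _ => hdiag τ), ← Finset.mul_sum]

lemma gF_formula {n m : ℕ} {f : Fin n → Fin m → E → ℝ} {g : Fin n → Fin m → E → E}
    (hgrad : ∀ τ i x, HasGradientAt (f τ i) (g τ i x) x)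
    {F : E → ℝ} (hF : ∀ y, F y = (1 / ((n : ℝ) * m)) * ∑ τ, ∑ i, f τ i y)
    {gF : E → E} (hgradF : ∀ x, HasGradientAt F (gF x) x) (u : E) :
    gF u = (1 / ((n : ℝ) * m)) • ∑ τ, ∑ i, g τ i u := by
  have hsum : HasFDerivAt (fun y => ∑ τ, ∑ i, f τ i y)
      (∑ τ, ∑ i, (InnerProductSpace.toDual ℝ E (g τ i u))) u := by
    apply HasFDerivAt.fun_sum
    intro τ _
    apply HasFDerivAt.fun_sum
    intro i _
    exact (hgrad τ i u).hasFDerivAt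
  have hc := hsum.const_mul (1 / ((n : ℝ) * m))
  have hFeq : F = fun y => (1 / ((n : ℝ) * m)) * ∑ τ, ∑ i, f τ i y := funext hF
  rw [← hFeq] at hc
  have hG := hc.hasGradientAt
  have hval : (InnerProductSpace.toDual ℝ E).symm
        ((1 / ((n : ℝ) * m)) • ∑ τ, ∑ i, (InnerProductSpace.toDual ℝ E (g τ i u)))
      = (1 / ((n : ℝ) * m)) • ∑ τ, ∑ i, g τ i u := by
    rw [map_smul, map_sum]
    congr 1
    refine Finset.sum_congr rfl fun τ _ => ?_
    rw [map_sum]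
    exact Finset.sum_congr rfl fun i _ => (InnerProductSpace.toDual ℝ E).symm_apply_apply _
  rw [hval] at hG
  exact (hgradF u).unique hG

lemma norm_sub_sq_le_two {p q : E} : ‖p - q‖ ^ 2 ≤ 2 * ‖p‖ ^ 2 + 2 * ‖q‖ ^ 2 := by
  have h := norm_sub_sq_real p q
  have h2 := abs_real_inner_le_norm p q
  have h3 := abs_le.mp h2
  nlinarith [sq_nonneg (‖p‖ - ‖q‖)]
open Finset

/-- Variance bound: the expected squared norm (over independent uniform indices
`σ : Fin n → Fin m`) of the averaged stochastic gradient difference minus its mean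
`∇f(x) − ∇f(w)` is bounded by `(4L/n)[P(x)−P(x*) + P(w)−P(x*)]`. -/
theorem variance_bound_stochastic_grad {d m n : ℕ} (hm : 0 < m) (hn : 0 < n)
    (L : ℝ) (hL : 0 < L)
    (f : Fin n → Fin m → EuclideanSpace ℝ (Fin d) → ℝ)
    (g : Fin n → Fin m → EuclideanSpace ℝ (Fin d) → EuclideanSpace ℝ (Fin d))
    (hconv : ∀ τ i, ConvexOn ℝ Set.univ (f τ i))
    (hgrad : ∀ τ i x, HasGradientAt (f τ i) (g τ i x) x)
    (hlip : ∀ τ i, LipschitzWith (Real.toNNReal L) (g τ i))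
    (F : EuclideanSpace ℝ (Fin d) → ℝ)
    (hF : ∀ y, F y = (1 / ((n : ℝ) * m)) * ∑ τ, ∑ i, f τ i y)
    (gF : EuclideanSpace ℝ (Fin d) → EuclideanSpace ℝ (Fin d))
    (hgradF : ∀ x, HasGradientAt F (gF x) x)
    (ψ : EuclideanSpace ℝ (Fin d) → ℝ) (hψ : ConvexOn ℝ Set.univ ψ)
    (P : EuclideanSpace ℝ (Fin d) → ℝ) (hP : ∀ y, P y = F y + ψ y)
    (xstar : EuclideanSpace ℝ (Fin d)) (hmin : ∀ y, P xstar ≤ P y)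
    (xk wk : EuclideanSpace ℝ (Fin d)) :
    (1 / (m : ℝ) ^ n) * ∑ σ : Fin n → Fin m,
        ‖(1 / (n : ℝ)) • ∑ τ, (g τ (σ τ) xk - g τ (σ τ) wk) + (gF wk - gF xk)‖ ^ 2 ≤
      (4 * L / n) * ((P xk - P xstar) + (P wk - P xstar)) := by
  classical
  have hm0 : ((m : ℝ)) ≠ 0 := Nat.cast_ne_zero.mpr hm.ne'
  have hn0 : ((n : ℝ)) ≠ 0 := Nat.cast_ne_zero.mpr hn.ne'
  have hmpos : (0:ℝ) < m := Nat.cast_pos.mpr hm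
  have hnpos : (0:ℝ) < n := Nat.cast_pos.mpr hn
  set v : Fin n → Fin m → EuclideanSpace ℝ (Fin d) := fun τ i => g τ i xk - g τ i wk with hv
  set μ : Fin n → EuclideanSpace ℝ (Fin d) := fun τ => (m : ℝ)⁻¹ • ∑ i, v τ i with hμ
  set Y : Fin n → Fin m → EuclideanSpace ℝ (Fin d) := fun τ i => v τ i - μ τ with hY
  have hYsum : ∀ τ, ∑ i, Y τ i = 0 := by
    intro τ
    have h1 : ∑ i, Y τ i = (∑ i, v τ i) - (m : ℝ) • μ τ := by
      rw [hY]
      rw [Finset.sum_sub_distrib, Finset.sum_const, Finset.card_univ, Fintype.card_fin]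
      congr 1
      exact (Nat.cast_smul_eq_nsmul (R := ℝ) m _).symm
    rw [h1, hμ, smul_smul, mul_inv_cancel₀ hm0, one_smul, sub_self]
  have hgFu : ∀ u, gF u = (1 / ((n : ℝ) * m)) • ∑ τ, ∑ i, g τ i u :=
    gF_formula hgrad hF hgradF
  have hsd : ∑ τ, ∑ i, v τ i = (∑ τ, ∑ i, g τ i xk) - (∑ τ, ∑ i, g τ i wk) := by
    simp [hv, Finset.sum_sub_distrib]
  have hμs : (1 / (n : ℝ)) • ∑ τ, μ τ = (1 / ((n : ℝ) * m)) • ∑ τ, ∑ i, v τ i := by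
    rw [hμ, ← Finset.smul_sum, smul_smul]
    congr 1
    field_simp
  have hdiff : gF wk - gF xk = -((1 / (n : ℝ)) • ∑ τ, μ τ) := by
    rw [hgFu, hgFu, hμs, hsd, ← smul_sub, ← smul_neg, neg_sub]
  -- rewrite each term of the σ-sum
  have hterm : ∀ σ : Fin n → Fin m,
      ‖(1 / (n : ℝ)) • ∑ τ, (g τ (σ τ) xk - g τ (σ τ) wk) + (gF wk - gF xk)‖ ^ 2
        = (1 / (n : ℝ)) ^ 2 * ‖∑ τ, Y τ (σ τ)‖ ^ 2 := by
    intro σ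
    have hYσ : ∑ τ, Y τ (σ τ) = (∑ τ, v τ (σ τ)) - ∑ τ, μ τ := by
      rw [hY, Finset.sum_sub_distrib]
    have harg : (1 / (n : ℝ)) • ∑ τ, (g τ (σ τ) xk - g τ (σ τ) wk) + (gF wk - gF xk)
        = (1 / (n : ℝ)) • ∑ τ, Y τ (σ τ) := by
      rw [hdiff, hYσ, smul_sub]
      abel
    rw [harg, norm_smul, mul_pow]
    congr 2
    rw [Real.norm_eq_abs, abs_of_nonneg (by positivity)]
  rw [Finset.sum_congr rfl fun σ _ => hterm σ, ← Finset.mul_sum,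
    sum_sq_indep Y hYsum]
  -- numeric collection
  have hpow : (m : ℝ) ^ n = (m : ℝ) ^ (n - 1) * m := by
    conv_lhs => rw [show n = (n - 1) + 1 from (Nat.succ_pred_eq_of_pos hn).symm]
    rw [pow_succ]
  set A := ∑ τ, ∑ i, ‖Y τ i‖ ^ 2 with hA
  set B := ∑ τ : Fin n, ∑ i : Fin m, ‖v τ i‖ ^ 2 with hB
  have hAnn : 0 ≤ A := Finset.sum_nonneg fun τ _ => Finset.sum_nonneg fun i _ => by positivity
  have hLHS : (1 / (m : ℝ) ^ n) * ((1 / (n : ℝ)) ^ 2 * ((m : ℝ) ^ (n - 1) * A))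
      = (1 / ((n : ℝ) ^ 2 * m)) * A := by
    rw [hpow]
    have hpne : ((m : ℝ)) ^ (n - 1) ≠ 0 := pow_ne_zero _ hm0
    field_simp
  rw [hLHS]
  -- A ≤ B  (variance ≤ second moment)
  have hAB : A ≤ B := by
    apply Finset.sum_le_sum
    intro τ _
    have hexp : ∀ i : Fin m, ‖Y τ i‖ ^ 2 = ‖v τ i‖ ^ 2 - 2 * ⟪v τ i, μ τ⟫_ℝ + ‖μ τ‖ ^ 2 := by
      intro i
      rw [hY]
      exact norm_sub_sq_real _ _
    rw [Finset.sum_congr rfl fun i _ => hexp i]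
    have hS : ∑ i, ⟪v τ i, μ τ⟫_ℝ = (m : ℝ)⁻¹ * ‖∑ i, v τ i‖ ^ 2 := by
      rw [← sum_inner, hμ, real_inner_smul_right, real_inner_self_eq_norm_sq]
    have hμn : ‖μ τ‖ ^ 2 = (m : ℝ)⁻¹ ^ 2 * ‖∑ i, v τ i‖ ^ 2 := by
      rw [hμ, norm_smul, mul_pow, Real.norm_eq_abs, abs_of_nonneg (by positivity)]
    rw [Finset.sum_add_distrib, Finset.sum_sub_distrib, ← Finset.mul_sum, hS,
      Finset.sum_const, Finset.card_univ, Fintype.card_fin, hμn, nsmul_eq_mul]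
    have hmm : (m : ℝ) * ((m : ℝ)⁻¹ ^ 2 * ‖∑ i, v τ i‖ ^ 2)
        = (m : ℝ)⁻¹ * ‖∑ i, v τ i‖ ^ 2 := by
      field_simp
    rw [hmm]
    have : 0 ≤ (m : ℝ)⁻¹ * ‖∑ i, v τ i‖ ^ 2 := by positivity
    linarith
  -- pointwise smoothness bound
  set C1 := F xk - F xstar - ⟪gF xstar, xk - xstar⟫_ℝ with hC1
  set C2 := F wk - F xstar - ⟪gF xstar, wk - xstar⟫_ℝ with hC2
  have hv4 : ∀ (τ : Fin n) (i : Fin m), ‖v τ i‖ ^ 2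
      ≤ 4 * L * ((f τ i xk - f τ i xstar - ⟪g τ i xstar, xk - xstar⟫_ℝ)
        + (f τ i wk - f τ i xstar - ⟪g τ i xstar, wk - xstar⟫_ℝ)) := by
    intro τ i
    have h1 := grad_sq_le hL (hconv τ i) (hgrad τ i) (hlip τ i) xk xstar
    have h2 := grad_sq_le hL (hconv τ i) (hgrad τ i) (hlip τ i) wk xstar
    have h3 : ‖v τ i‖ ^ 2 ≤ 2 * ‖g τ i xk - g τ i xstar‖ ^ 2
        + 2 * ‖g τ i wk - g τ i xstar‖ ^ 2 := by
      have he : v τ i = (g τ i xk - g τ i xstar) - (g τ i wk - g τ i xstar) := by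
        rw [hv]
        abel
      rw [he]
      exact norm_sub_sq_le_two
    linarith
  -- sums of f and g at the relevant points
  have hsumf : ∀ y, ∑ τ, ∑ i, f τ i y = ((n : ℝ) * m) * F y := by
    intro y
    rw [hF y]
    field_simp
  have hSg : ∑ τ, ∑ i, g τ i xstar = ((n : ℝ) * m) • gF xstar := by
    rw [hgFu xstar, smul_smul]
    rw [show ((n : ℝ) * m) * (1 / ((n : ℝ) * m)) = 1 by field_simp]
    rw [one_smul]
  have hsumginner : ∀ z : EuclideanSpace ℝ (Fin d),
      ∑ τ, ∑ i, ⟪g τ i xstar, z⟫_ℝ = ((n : ℝ) * m) * ⟪gF xstar, z⟫_ℝ := by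
    intro z
    have : ∑ τ, ∑ i, ⟪g τ i xstar, z⟫_ℝ = ⟪∑ τ, ∑ i, g τ i xstar, z⟫_ℝ := by
      rw [sum_inner]
      exact Finset.sum_congr rfl fun τ _ => (sum_inner _ _ _).symm
    rw [this, hSg, real_inner_smul_left]
  have hsum1 : ∑ τ : Fin n, ∑ i : Fin m,
      (f τ i xk - f τ i xstar - ⟪g τ i xstar, xk - xstar⟫_ℝ) = ((n : ℝ) * m) * C1 := by
    simp only [Finset.sum_sub_distrib]
    rw [hsumf xk, hsumf xstar, hsumginner (xk - xstar), hC1]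
    ring
  have hsum2 : ∑ τ : Fin n, ∑ i : Fin m,
      (f τ i wk - f τ i xstar - ⟪g τ i xstar, wk - xstar⟫_ℝ) = ((n : ℝ) * m) * C2 := by
    simp only [Finset.sum_sub_distrib]
    rw [hsumf wk, hsumf xstar, hsumginner (wk - xstar), hC2]
    ring
  have hBbound : B ≤ 4 * L * (((n : ℝ) * m) * (C1 + C2)) := by
    calc B ≤ ∑ τ : Fin n, ∑ i : Fin m,
        (4 * L * ((f τ i xk - f τ i xstar - ⟪g τ i xstar, xk - xstar⟫_ℝ)
          + (f τ i wk - f τ i xstar - ⟪g τ i xstar, wk - xstar⟫_ℝ))) :=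
          Finset.sum_le_sum fun τ _ => Finset.sum_le_sum fun i _ => hv4 τ i
      _ = 4 * L * (((n : ℝ) * m) * (C1 + C2)) := by
          simp only [← Finset.mul_sum]
          congr 1
          simp only [Finset.sum_add_distrib]
          rw [hsum1, hsum2]
          ring
  have hopt1 := opt_lemma hgradF hψ hP hmin xk
  have hopt2 := opt_lemma hgradF hψ hP hmin wk
  have hfac : (0:ℝ) ≤ 1 / ((n : ℝ) ^ 2 * m) := by positivity
  calc (1 / ((n : ℝ) ^ 2 * m)) * A
      ≤ (1 / ((n : ℝ) ^ 2 * m)) * (4 * L * (((n : ℝ) * m) * (C1 + C2))) :=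
        mul_le_mul_of_nonneg_left (le_trans hAB hBbound) hfac
    _ = (4 * L / n) * (C1 + C2) := by
        field_simp
    _ ≤ (4 * L / n) * ((P xk - P xstar) + (P wk - P xstar)) := by
        apply mul_le_mul_of_nonneg_left _ (by positivity)
        rw [hC1, hC2]
        linarith
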